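/- Let μ > 0. Define b(z) := z^{1/μ + 1} / (1+z)^{1/μ} for z ∈ (0,1), define φ(y,z) := (1+z)·(1 − (y/z)^μ) for 0 < y ≤ z < 1, and define ψ : [0,+∞) × (0,1) → ℝ by ψ(y,z) = 1 if 0 ≤ y < b(z), ψ(y,z) = 1 − (1 − φ(y,z)²)² if b(z) ≤ y ≤ z, and ψ(y,z) = 0 if y > z. Then: (1) 0 < b(z) < z for all z ∈ (0,1), with φ(b(z),z) = 1 and φ(z,z) = 0; (2) ψ is a C¹ function on [0,+∞) × (0,1) with values in [0,1]; (3) |∂ψ/∂y (y,z)| ≤ 8μ/y for all y > 0 and z ∈ (0,1); (4) |∂ψ/∂z (y,z)| ≤ 4 + 8μ/z for all y ≥ 0 and z ∈ (0,1). -/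

import Mathlib

open Set

noncomputable def bumpH (t : ℝ) : ℝ := if t < 0 then 0 else if t ≤ 1 then 1 - (1 - t^2)^2 else 1
noncomputable def bumpH' (t : ℝ) : ℝ := if t < 0 then 0 else if t ≤ 1 then 4*t*(1-t^2) else 0

lemma bumpH_of_le (t : ℝ) (h : 1 ≤ t) : bumpH t = 1 := by
  unfold bumpH
  rcases eq_or_lt_of_le h with h1 | h1
  · rw [← h1]; norm_num
  · rw [if_neg (by linarith), if_neg (by linarith)]

lemma bumpH_of_neg (t : ℝ) (h : t < 0) : bumpH t = 0 := by simp [bumpH, h]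

lemma bumpH_of_mem (t : ℝ) (h0 : 0 ≤ t) (h1 : t ≤ 1) : bumpH t = 1 - (1 - t^2)^2 := by
  simp [bumpH, not_lt.mpr h0, h1]

lemma bumpH'_eq_zero (t : ℝ) (h : t < 0 ∨ 1 < t) : bumpH' t = 0 := by
  rcases h with h | h
  · simp [bumpH', h]
  · simp [bumpH', not_lt.mpr (by linarith : (0:ℝ) ≤ t), not_le.mpr h]

lemma bumpH'_abs_le (t : ℝ) : |bumpH' t| ≤ 4 := by
  unfold bumpH'
  split_ifs with h1 h2
  · norm_num
  · push_neg at h1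
    rw [abs_le]; constructor <;> nlinarith
  · norm_num

-- the polynomial branch
lemma polyDeriv (t : ℝ) : HasDerivAt (fun s : ℝ => 1 - (1 - s^2)^2) (4*t*(1-t^2)) t := by
  have h : HasDerivAt (fun s : ℝ => 1 - (1 - s^2)^2) (-(2*(1-t^2)*(-(2*t)))) t := by
    have h1 : HasDerivAt (fun s : ℝ => 1 - s^2) (-(2*t)) t := by
      simpa using ((hasDerivAt_pow 2 t).const_sub 1)
    simpa using ((h1.pow 2).const_sub 1)
  convert h using 1; ring

lemma hasDerivAt_bumpH (t : ℝ) : HasDerivAt bumpH (bumpH' t) t := by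
  rcases lt_trichotomy t 0 with h | h | h
  · rw [bumpH'_eq_zero t (Or.inl h)]
    apply (hasDerivAt_const t (0:ℝ)).congr_of_eventuallyEq
    filter_upwards [Iio_mem_nhds h] with s hs
    exact bumpH_of_neg s hs
  · subst h
    have h1 : HasDerivWithinAt bumpH (bumpH' 0) (Iic 0) 0 := by
      have : bumpH' 0 = 0 := by simp [bumpH']
      rw [this]
      apply (hasDerivWithinAt_const 0 _ (0:ℝ)).congr
      · intro s hs
        rcases eq_or_lt_of_le (mem_Iic.mp hs) with h | h
        · subst h; rw [bumpH_of_mem 0 le_rfl zero_le_one]; norm_num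
        · exact bumpH_of_neg s h
      · rw [bumpH_of_mem 0 le_rfl zero_le_one]; norm_num
    have h2 : HasDerivWithinAt bumpH (bumpH' 0) (Ici 0) 0 := by
      have : bumpH' 0 = 4*0*(1-0^2) := by simp [bumpH']
      rw [this]
      apply ((polyDeriv 0).hasDerivWithinAt).congr_of_eventuallyEq
      · filter_upwards [inter_mem_nhdsWithin (Ici (0:ℝ)) (Iio_mem_nhds (by norm_num : (0:ℝ) < 1))] with s hs
        exact bumpH_of_mem s hs.1 hs.2.le
      · rw [bumpH_of_mem 0 le_rfl zero_le_one]
    have := h1.union h2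
    rwa [Iic_union_Ici, hasDerivWithinAt_univ] at this
  · rcases lt_trichotomy t 1 with h1 | h1 | h1
    · have : bumpH' t = 4*t*(1-t^2) := by simp [bumpH', not_lt.mpr h.le, h1.le]
      rw [this]
      apply (polyDeriv t).congr_of_eventuallyEq
      filter_upwards [Ioo_mem_nhds h h1] with s hs
      exact bumpH_of_mem s hs.1.le hs.2.le
    · subst h1
      have hv : bumpH' 1 = 0 := by simp [bumpH']
      rw [hv]
      have h1 : HasDerivWithinAt bumpH (0:ℝ) (Iic 1) 1 := by
        have : (0:ℝ) = 4*1*(1-1^2) := by norm_num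
        rw [this]
        apply ((polyDeriv 1).hasDerivWithinAt).congr_of_eventuallyEq
        · filter_upwards [inter_mem_nhdsWithin (Iic (1:ℝ)) (Ioi_mem_nhds (by norm_num : (0:ℝ) < 1))] with s hs
          exact bumpH_of_mem s (le_of_lt hs.2) hs.1
        · rw [bumpH_of_mem 1 zero_le_one le_rfl]
      have h2 : HasDerivWithinAt bumpH (0:ℝ) (Ici 1) 1 := by
        apply (hasDerivWithinAt_const 1 _ (1:ℝ)).congr
        · intro s hs; exact bumpH_of_le s hs
        · exact bumpH_of_le 1 le_rfl
      have := h1.union h2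
      rwa [Iic_union_Ici, hasDerivWithinAt_univ] at this
    · rw [bumpH'_eq_zero t (Or.inr h1)]
      apply (hasDerivAt_const t (1:ℝ)).congr_of_eventuallyEq
      filter_upwards [Ioi_mem_nhds h1] with s hs
      exact bumpH_of_le s hs.le

lemma continuous_bumpH' : Continuous bumpH' := by
  have : bumpH' = fun t => if t ≤ 0 then 0 else if t ≤ 1 then 4*t*(1-t^2) else 0 := by
    funext t
    unfold bumpH'
    rcases lt_trichotomy t 0 with h | h | h
    · simp [h, h.le]
    · subst h; norm_num
    · simp [not_lt.mpr h.le, not_le.mpr h]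
  rw [this]
  have hinner : Continuous fun t : ℝ => if t ≤ 1 then 4*t*(1-t^2) else 0 :=
    Continuous.if_le (by continuity) continuous_const continuous_id continuous_const
      (fun x hx => by rw [hx]; ring)
  refine Continuous.if_le continuous_const hinner continuous_id continuous_const ?_
  intro x hx
  subst hx; norm_num

lemma contDiff_bumpH : ContDiff ℝ 1 bumpH := by
  rw [contDiff_one_iff_deriv]
  have hd : deriv bumpH = bumpH' := funext fun t => (hasDerivAt_bumpH t).deriv
  exact ⟨fun t => (hasDerivAt_bumpH t).differentiableAt, hd ▸ continuous_bumpH'⟩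

lemma bumpH_mem (t : ℝ) : bumpH t ∈ Icc (0:ℝ) 1 := by
  unfold bumpH
  split_ifs with h1 h2
  · norm_num
  · push_neg at h1
    have h3 : 0 ≤ 1 - t^2 := by nlinarith
    have h4 : 1 - t^2 ≤ 1 := by nlinarith
    have h5 : (1-t^2)^2 ≤ 1 := by nlinarith
    constructor
    · linarith
    · nlinarith [sq_nonneg (1 - t^2)]
  · norm_num

/-- The gluing locus `b(z) = z^{1/μ+1} / (1+z)^{1/μ}` from the proof of the paper's
bump-function lemma. -/
noncomputable def bumpB (μ z : ℝ) : ℝ := z ^ (1 / μ + 1) / (1 + z) ^ (1 / μ)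

/-- The auxiliary function `φ(y,z) = (1+z)(1 - (y/z)^μ)`. -/
noncomputable def bumpPhi (μ y z : ℝ) : ℝ := (1 + z) * (1 - (y / z) ^ μ)

/-- The bump function `ψ`, defined piecewise on `[0,∞) × (0,1)`:
`ψ(y,z) = 1` if `0 ≤ y < b(z)`, `ψ(y,z) = 1 - (1 - φ(y,z)²)²` if `b(z) ≤ y ≤ z`,
and `ψ(y,z) = 0` if `y > z`. -/
noncomputable def bumpPsi (μ : ℝ) (p : ℝ × ℝ) : ℝ :=
  if p.1 < bumpB μ p.2 then 1
  else if p.1 ≤ p.2 then 1 - (1 - (bumpPhi μ p.1 p.2) ^ 2) ^ 2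
  else 0

variable {μ y z : ℝ}

lemma onez (hz : 0 < z) : (0:ℝ) < 1 + z := by linarith

lemma bumpB_div (hμ : 0 < μ) (hz : 0 < z) : bumpB μ z / z = (z/(1+z)) ^ (1/μ) := by
  unfold bumpB
  rw [Real.rpow_add hz, Real.rpow_one, Real.div_rpow hz.le (onez hz).le]
  field_simp

lemma bumpB_pos (hμ : 0 < μ) (hz : 0 < z) : 0 < bumpB μ z :=
  div_pos (Real.rpow_pos_of_pos hz _) (Real.rpow_pos_of_pos (onez hz) _)

lemma bumpB_lt (hμ : 0 < μ) (hz : 0 < z) : bumpB μ z < z := by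
  have h1 : bumpB μ z / z < 1 := by
    rw [bumpB_div hμ hz]
    exact Real.rpow_lt_one (div_nonneg hz.le (onez hz).le)
      ((div_lt_one (onez hz)).mpr (by linarith)) (by positivity)
  calc bumpB μ z = bumpB μ z / z * z := by field_simp
    _ < 1 * z := by exact mul_lt_mul_of_pos_right h1 hz
    _ = z := one_mul z

lemma bumpB_pow (hμ : 0 < μ) (hz : 0 < z) : (bumpB μ z / z) ^ μ = z/(1+z) := by
  rw [bumpB_div hμ hz, ← Real.rpow_mul (div_nonneg hz.le (onez hz).le),
    one_div_mul_cancel hμ.ne', Real.rpow_one]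

lemma bumpPhi_bumpB (hμ : 0 < μ) (hz : 0 < z) : bumpPhi μ (bumpB μ z) z = 1 := by
  unfold bumpPhi
  rw [bumpB_pow hμ hz]
  field_simp
  ring

lemma bumpPhi_self (hμ : 0 < μ) (hz : 0 < z) : bumpPhi μ z z = 0 := by
  unfold bumpPhi
  rw [div_self hz.ne', Real.one_rpow]
  ring

lemma phi_ge_one (hμ : 0 < μ) (hz : 0 < z) (hy : 0 ≤ y) (hyb : y ≤ bumpB μ z) :
    1 ≤ bumpPhi μ y z := by
  have h1 : (y/z)^μ ≤ (bumpB μ z / z)^μ :=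
    Real.rpow_le_rpow (div_nonneg hy hz.le) (div_le_div_of_nonneg_right hyb hz.le) hμ.le
  rw [bumpB_pow hμ hz] at h1
  have h2 : (y/z)^μ * (1+z) ≤ z := (le_div_iff₀ (onez hz)).mp h1
  unfold bumpPhi
  nlinarith [onez hz]

lemma phi_le_one (hμ : 0 < μ) (hz : 0 < z) (hby : bumpB μ z ≤ y) :
    bumpPhi μ y z ≤ 1 := by
  have h1 : (bumpB μ z / z)^μ ≤ (y/z)^μ :=
    Real.rpow_le_rpow (div_nonneg (bumpB_pos hμ hz).le hz.le)
      (div_le_div_of_nonneg_right hby hz.le) hμ.le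
  rw [bumpB_pow hμ hz] at h1
  have h2 : z ≤ (y/z)^μ * (1+z) := (div_le_iff₀ (onez hz)).mp h1
  unfold bumpPhi
  nlinarith [onez hz]

lemma phi_nonneg (hμ : 0 < μ) (hz : 0 < z) (hy : 0 ≤ y) (hyz : y ≤ z) :
    0 ≤ bumpPhi μ y z := by
  have h1 : (y/z)^μ ≤ 1 :=
    Real.rpow_le_one (div_nonneg hy hz.le) ((div_le_one hz).mpr hyz) hμ.le
  unfold bumpPhi
  nlinarith [onez hz]

lemma phi_neg (hμ : 0 < μ) (hz : 0 < z) (hzy : z < y) : bumpPhi μ y z < 0 := by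
  have hy : 0 < y := hz.trans hzy
  have h1 : 1 < (y/z)^μ :=
    (Real.one_lt_rpow_iff_of_pos (by positivity)).mpr (Or.inl ⟨(one_lt_div hz).mpr hzy, hμ⟩)
  unfold bumpPhi
  nlinarith [onez hz]

lemma psi_eq_H (hμ : 0 < μ) (hy : 0 < y) (hz : 0 < z) :
    bumpPsi μ (y, z) = bumpH (bumpPhi μ y z) := by
  unfold bumpPsi
  simp only
  split_ifs with h1 h2
  · exact (bumpH_of_le _ (phi_ge_one hμ hz hy.le h1.le)).symm
  · rw [bumpH_of_mem _ (phi_nonneg hμ hz hy.le h2) (phi_le_one hμ hz (not_lt.mp h1))]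
  · exact (bumpH_of_neg _ (phi_neg hμ hz (not_le.mp h2))).symm

lemma hasDerivAt_phi_y (hμ : 0 < μ) (hy : 0 < y) (hz : 0 < z) :
    HasDerivAt (fun t => bumpPhi μ t z) (-((1+z) * μ * (y/z)^μ / y)) y := by
  have h0 : HasDerivAt (fun t : ℝ => t / z) (1/z) y := (hasDerivAt_id y).div_const z
  have h1 : HasDerivAt (fun t : ℝ => (t/z)^μ) ((1/z) * μ * (y/z)^(μ-1)) y :=
    h0.rpow_const (Or.inl (div_pos hy hz).ne')
  have h2 := (h1.const_sub 1).const_mul (1+z)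
  have h3 : (fun t => (1+z) * (1 - (t/z)^μ)) = fun t => bumpPhi μ t z := rfl
  rw [h3] at h2
  refine h2.congr_deriv ?_
  rw [Real.rpow_sub_one (div_pos hy hz).ne']
  field_simp

lemma hasDerivAt_phi_z (hμ : 0 < μ) (hy : 0 < y) (hz : 0 < z) :
    HasDerivAt (fun t => bumpPhi μ y t)
      ((1 - (y/z)^μ) + (1+z) * μ * (y/z)^μ / z) z := by
  have h0 : HasDerivAt (fun t : ℝ => y / t) (y * (-(z^2)⁻¹)) z := by
    simpa [div_eq_mul_inv] using (hasDerivAt_inv hz.ne').const_mul y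
  have h1 : HasDerivAt (fun t : ℝ => (y/t)^μ) ((y * (-(z^2)⁻¹)) * μ * (y/z)^(μ-1)) z :=
    h0.rpow_const (Or.inl (div_pos hy hz).ne')
  have h2 := ((hasDerivAt_id z).const_add 1).mul (h1.const_sub 1)
  simp only [id_eq] at h2
  have h3 : (fun t => (1+t) * (1 - (y/t)^μ)) = fun t => bumpPhi μ y t := rfl
  rw [← h3]
  refine h2.congr_deriv ?_
  rw [Real.rpow_sub_one (div_pos hy hz).ne']
  field_simp

lemma s_le_one_of_phi_nonneg (hz : 0 < z) (h : 0 ≤ bumpPhi μ y z) : (y/z)^μ ≤ 1 := by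
  unfold bumpPhi at h
  nlinarith [onez hz]

theorem bumpPsi_properties (μ : ℝ) (hμ : 0 < μ) :
    (∀ z ∈ Ioo (0:ℝ) 1,
      0 < bumpB μ z ∧ bumpB μ z < z ∧ bumpPhi μ (bumpB μ z) z = 1 ∧ bumpPhi μ z z = 0) ∧
    (∃ (U : Set (ℝ × ℝ)) (g : ℝ × ℝ → ℝ), IsOpen U ∧ (Ici (0:ℝ) ×ˢ Ioo (0:ℝ) 1) ⊆ U ∧
      ContDiffOn ℝ 1 g U ∧ ∀ p ∈ Ici (0:ℝ) ×ˢ Ioo (0:ℝ) 1, g p = bumpPsi μ p) ∧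
    (∀ y ∈ Ici (0:ℝ), ∀ z ∈ Ioo (0:ℝ) 1, bumpPsi μ (y, z) ∈ Icc (0:ℝ) 1) ∧
    (∀ z ∈ Ioo (0:ℝ) 1, ∀ y, 0 < y →
      |deriv (fun t => bumpPsi μ (t, z)) y| ≤ 8 * μ / y) ∧
    (∀ z ∈ Ioo (0:ℝ) 1, ∀ y, 0 ≤ y →
      |deriv (fun t => bumpPsi μ (y, t)) z| ≤ 4 + 8 * μ / z) := by
  refine ⟨?_, ?_, ?_, ?_, ?_⟩
  · intro z hz
    exact ⟨bumpB_pos hμ hz.1, bumpB_lt hμ hz.1, bumpPhi_bumpB hμ hz.1, bumpPhi_self hμ hz.1⟩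
  · -- the C¹ extension
    set B : Set (ℝ × ℝ) := {p : ℝ × ℝ | p.2 ∈ Ioo (0:ℝ) 1 ∧ p.1 < bumpB μ p.2} with hBdef
    set A : Set (ℝ × ℝ) := Ioi (0:ℝ) ×ˢ Ioo (0:ℝ) 1 with hAdef
    have hBcont : ∀ w : ℝ, 0 < w → ContinuousAt (bumpB μ) w := by
      intro w hw
      unfold bumpB
      apply ContinuousAt.div
      · exact Real.continuousAt_rpow_const w _ (Or.inl hw.ne')
      · exact ContinuousAt.comp
          (Real.continuousAt_rpow_const (1+w) _ (Or.inl (by positivity)))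
          (by fun_prop)
      · exact (Real.rpow_pos_of_pos (onez hw) _).ne'
    have hBopen : IsOpen B := by
      have heq : B = (univ ×ˢ Ioo (0:ℝ) 1) ∩
          ((fun p : ℝ × ℝ => bumpB μ p.2 - p.1) ⁻¹' Ioi 0) := by
        ext p
        simp only [hBdef, mem_setOf_eq, mem_inter_iff, mem_prod, mem_univ, true_and,
          mem_preimage, mem_Ioi, sub_pos]
      rw [heq]
      apply ContinuousOn.isOpen_inter_preimage
      · intro p hp
        exact (((hBcont p.2 hp.2.1).comp continuous_snd.continuousAt).sub
          continuous_fst.continuousAt).continuousWithinAt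
      · exact isOpen_univ.prod isOpen_Ioo
      · exact isOpen_Ioi
    have hAopen : IsOpen A := isOpen_Ioi.prod isOpen_Ioo
    refine ⟨A ∪ B, fun p => if p.1 < bumpB μ p.2 then 1 else bumpH (bumpPhi μ p.1 p.2),
      hAopen.union hBopen, ?_, ?_, ?_⟩
    · rintro p ⟨hp1, hp2⟩
      rcases eq_or_lt_of_le (mem_Ici.mp hp1) with h | h
      · exact Or.inr ⟨hp2, by rw [← h]; exact bumpB_pos hμ hp2.1⟩
      · exact Or.inl ⟨h, hp2⟩
    · -- ContDiffOn
      have hgA : ∀ q : ℝ × ℝ, 0 < q.1 → 0 < q.2 →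
          (if q.1 < bumpB μ q.2 then (1:ℝ) else bumpH (bumpPhi μ q.1 q.2))
            = bumpH (bumpPhi μ q.1 q.2) := by
        intro q hq1 hq2
        split_ifs with h
        · exact (bumpH_of_le _ (phi_ge_one hμ hq2 hq1.le h.le)).symm
        · rfl
      intro p hp
      apply ContDiffAt.contDiffWithinAt
      rcases hp with hp | hp
      · -- on A : equals H ∘ φ
        have hev : (fun q : ℝ × ℝ => if q.1 < bumpB μ q.2 then (1:ℝ)
            else bumpH (bumpPhi μ q.1 q.2)) =ᶠ[nhds p]
            (fun q => bumpH (bumpPhi μ q.1 q.2)) := by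
          filter_upwards [hAopen.mem_nhds hp] with q hq
          exact hgA q hq.1 hq.2.1
        have hφ : ContDiffAt ℝ 1 (fun q : ℝ × ℝ => bumpPhi μ q.1 q.2) p := by
          unfold bumpPhi
          exact (contDiffAt_const.add contDiffAt_snd).mul
            (contDiffAt_const.sub ((contDiffAt_fst.div contDiffAt_snd hp.2.1.ne').rpow_const_of_ne
              (div_pos hp.1 hp.2.1).ne'))
        exact (contDiff_bumpH.contDiffAt.comp p hφ).congr_of_eventuallyEq hev
      · -- on B : equals 1
        have hev : (fun q : ℝ × ℝ => if q.1 < bumpB μ q.2 then (1:ℝ)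
            else bumpH (bumpPhi μ q.1 q.2)) =ᶠ[nhds p] (fun _ => 1) := by
          filter_upwards [hBopen.mem_nhds hp] with q hq
          rw [if_pos hq.2]
        exact contDiffAt_const.congr_of_eventuallyEq hev
    · -- equality with bumpPsi on the set
      rintro p ⟨hp1, hp2⟩
      show (if p.1 < bumpB μ p.2 then (1:ℝ) else bumpH (bumpPhi μ p.1 p.2)) = bumpPsi μ p
      by_cases h : p.1 < bumpB μ p.2
      · rw [if_pos h]
        unfold bumpPsi
        rw [if_pos h]
      · rw [if_neg h]
        push_neg at h
        have hp1' : 0 < p.1 := lt_of_lt_of_le (bumpB_pos hμ hp2.1) h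
        have := psi_eq_H (μ := μ) (y := p.1) (z := p.2) hμ hp1' hp2.1
        rw [← this]
  · -- values in [0,1]
    intro y hy z hz
    rcases eq_or_lt_of_le (mem_Ici.mp hy) with h | h
    · have : bumpPsi μ (y, z) = 1 := by
        unfold bumpPsi
        rw [if_pos]
        rw [← h]
        exact bumpB_pos hμ hz.1
      rw [this]; norm_num
    · rw [psi_eq_H hμ h hz.1]
      exact bumpH_mem _
  · -- y-derivative bound
    intro z hz y hy
    have hz0 := hz.1
    have hEq : (fun t => bumpPsi μ (t, z)) =ᶠ[nhds y] (fun t => bumpH (bumpPhi μ t z)) := by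
      filter_upwards [Ioi_mem_nhds hy] with t ht
      exact psi_eq_H hμ ht hz0
    rw [hEq.deriv_eq]
    have hφd := hasDerivAt_phi_y (y := y) (z := z) hμ hy hz0
    have hcomp := (hasDerivAt_bumpH (bumpPhi μ y z)).comp y hφd
    rw [(hcomp.congr_of_eventuallyEq (by rfl)).deriv]
    by_cases hin : 0 ≤ bumpPhi μ y z ∧ bumpPhi μ y z ≤ 1
    · have hs0 : (0:ℝ) ≤ (y/z)^μ := Real.rpow_nonneg (by positivity) μ
      have hs1 : (y/z)^μ ≤ 1 := s_le_one_of_phi_nonneg hz0 hin.1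
      rw [abs_mul]
      have hD : |(-((1+z) * μ * (y/z)^μ / y))| ≤ 2 * μ / y := by
        rw [abs_neg, abs_of_nonneg (by positivity)]
        have h2m : (1+z) * μ * (y/z)^μ ≤ 2 * μ := by
          nlinarith [mul_nonneg (mul_nonneg (by linarith [hz.1] : (0:ℝ) ≤ 1+z) hμ.le)
            (by linarith : (0:ℝ) ≤ 1 - (y/z)^μ),
            mul_nonneg hμ.le (by linarith [hz.2] : (0:ℝ) ≤ 1 - z)]
        exact div_le_div_of_nonneg_right h2m hy.le
      calc |bumpH' (bumpPhi μ y z)| * |(-((1+z) * μ * (y/z)^μ / y))|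
          ≤ 4 * (2 * μ / y) :=
            mul_le_mul (bumpH'_abs_le _) hD (abs_nonneg _) (by norm_num)
        _ = 8 * μ / y := by ring
    · have : bumpH' (bumpPhi μ y z) = 0 := by
        apply bumpH'_eq_zero
        rcases not_and_or.mp hin with h | h
        · exact Or.inl (not_le.mp h)
        · exact Or.inr (not_le.mp h)
      rw [this, zero_mul, abs_zero]
      positivity
  · -- z-derivative bound
    intro z hz y hy
    have hz0 := hz.1
    rcases eq_or_lt_of_le hy with h | h
    · have hEq : (fun t => bumpPsi μ (y, t)) =ᶠ[nhds z] (fun _ => (1:ℝ)) := by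
        filter_upwards [Ioi_mem_nhds hz0] with t ht
        unfold bumpPsi
        rw [if_pos]
        simp only
        rw [← h]
        exact bumpB_pos hμ ht
      rw [hEq.deriv_eq, deriv_const]
      simp only [abs_zero]
      positivity
    · have hEq : (fun t => bumpPsi μ (y, t)) =ᶠ[nhds z]
          (fun t => bumpH (bumpPhi μ y t)) := by
        filter_upwards [Ioi_mem_nhds hz0] with t ht
        exact psi_eq_H hμ h ht
      rw [hEq.deriv_eq]
      have hφd := hasDerivAt_phi_z (y := y) (z := z) hμ h hz0
      have hcomp := (hasDerivAt_bumpH (bumpPhi μ y z)).comp z hφd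
      rw [(hcomp.congr_of_eventuallyEq (by rfl)).deriv]
      by_cases hin : 0 ≤ bumpPhi μ y z ∧ bumpPhi μ y z ≤ 1
      · have hs0 : (0:ℝ) ≤ (y/z)^μ := Real.rpow_nonneg (by positivity) μ
        have hs1 : (y/z)^μ ≤ 1 := s_le_one_of_phi_nonneg hz0 hin.1
        rw [abs_mul]
        have hD : |((1 - (y/z)^μ) + (1+z) * μ * (y/z)^μ / z)| ≤ 1 + 2 * μ / z := by
          have h1 : |(1:ℝ) - (y/z)^μ| ≤ 1 := by rw [abs_le]; constructor <;> linarith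
          have h2 : |(1+z) * μ * (y/z)^μ / z| ≤ 2 * μ / z := by
            rw [abs_of_nonneg (by positivity)]
            have h2m : (1+z) * μ * (y/z)^μ ≤ 2 * μ := by
              nlinarith [mul_nonneg (mul_nonneg (by linarith [hz.1] : (0:ℝ) ≤ 1+z) hμ.le)
                (by linarith : (0:ℝ) ≤ 1 - (y/z)^μ),
                mul_nonneg hμ.le (by linarith [hz.2] : (0:ℝ) ≤ 1 - z)]
            exact div_le_div_of_nonneg_right h2m hz0.le
          calc |((1 - (y/z)^μ) + (1+z) * μ * (y/z)^μ / z)|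
              ≤ |(1:ℝ) - (y/z)^μ| + |(1+z) * μ * (y/z)^μ / z| := abs_add_le _ _
            _ ≤ 1 + 2 * μ / z := add_le_add h1 h2
        calc |bumpH' (bumpPhi μ y z)| * |((1 - (y/z)^μ) + (1+z) * μ * (y/z)^μ / z)|
            ≤ 4 * (1 + 2 * μ / z) :=
              mul_le_mul (bumpH'_abs_le _) hD (abs_nonneg _) (by norm_num)
          _ = 4 + 8 * μ / z := by ring
      · have : bumpH' (bumpPhi μ y z) = 0 := by
          apply bumpH'_eq_zero
          rcases not_and_or.mp hin with h | h
          · exact Or.inl (not_le.mp h)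
          · exact Or.inr (not_le.mp h)
        rw [this, zero_mul, abs_zero]
        positivity
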